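/- With J the isometric factor of the polar decomposition of P-Q, one has JK = L⊥ and JL = K⊥, where K, L are the ranges of P, Q. -/

import Mathlib

open NormedSpace InnerProductSpace

theorem keylemma {V : Type*} [NormedAddCommGroup V] [InnerProductSpace ℝ V] [CompleteSpace V]
    (T D : V →L[ℝ] V) (hTsa : IsSelfAdjoint T) (c : ℝ) (hc : 0 < c)
    (hcoer : ∀ u, c * ‖u‖ ^ 2 ≤ ⟪T u, u⟫_ℝ)
    (hanti : T * D + D * T = 0) : D = 0 := by
  set e : ℝ → (V →L[ℝ] V) := fun t => exp (-(t • T)) with he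
  have hsw : ∀ x y : V, ⟪T x, y⟫_ℝ = ⟪x, T y⟫_ℝ := by
    intro x y
    rw [← ContinuousLinearMap.adjoint_inner_left, (ContinuousLinearMap.isSelfAdjoint_iff').mp hTsa]
  have hu : ∀ (x : V) (t : ℝ), HasDerivAt (fun t => e t x) (-(T (e t x))) t := by
    intro x t
    have h1 := (hasDerivAt_exp_smul_const' (𝕂 := ℝ) (-T) t).clm_apply (hasDerivAt_const t x)
    simpa [he, ContinuousLinearMap.mul_apply] using h1
  have hphi : ∀ (x : V) (t : ℝ), 0 ≤ t → ‖e t x‖ ^ 2 ≤ Real.exp (-(2 * c) * t) * ‖x‖ ^ 2 := by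
    intro x t ht
    set ψ : ℝ → ℝ := fun t => Real.exp (2 * c * t) * ⟪e t x, e t x⟫_ℝ with hψ
    have hψd : ∀ s, HasDerivAt ψ
        (Real.exp (2 * c * s) * (2 * c * ⟪e s x, e s x⟫_ℝ
          + (⟪e s x, -(T (e s x))⟫_ℝ + ⟪-(T (e s x)), e s x⟫_ℝ))) s := by
      intro s
      have hexp : HasDerivAt (fun t => Real.exp (2 * c * t)) (2 * c * Real.exp (2 * c * s)) s := by
        simpa [Function.comp_def, mul_comm] using (Real.hasDerivAt_exp (2*c*s)).comp s
          ((hasDerivAt_id s).const_mul (2*c))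
      have hin : HasDerivAt (fun t => ⟪e t x, e t x⟫_ℝ)
          (⟪e s x, -(T (e s x))⟫_ℝ + ⟪-(T (e s x)), e s x⟫_ℝ) s :=
        (hu x s).inner ℝ (hu x s)
      have := hexp.mul hin
      exact this.congr_deriv (by ring)
    have hψmono : AntitoneOn ψ (Set.Ici 0) := by
      apply antitoneOn_of_deriv_nonpos (convex_Ici 0)
      · exact (Differentiable.continuous fun s => (hψd s).differentiableAt).continuousOn
      · intro s _
        exact ((hψd s).differentiableAt).differentiableWithinAt
      · intro s _
        rw [(hψd s).deriv]
        have h1 : ⟪-(T (e s x)), e s x⟫_ℝ = -⟪T (e s x), e s x⟫_ℝ := by simp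
        have h2 : ⟪e s x, -(T (e s x))⟫_ℝ = -⟪T (e s x), e s x⟫_ℝ := by
          rw [real_inner_comm]; simp
        have h3 := hcoer (e s x)
        have h4 : ⟪e s x, e s x⟫_ℝ = ‖e s x‖ ^ 2 := real_inner_self_eq_norm_sq _
        have h5 : (2 * c * ⟪e s x, e s x⟫_ℝ
            + (⟪e s x, -(T (e s x))⟫_ℝ + ⟪-(T (e s x)), e s x⟫_ℝ)) ≤ 0 := by
          rw [h1, h2, h4]; nlinarith
        have he' : 0 < Real.exp (2 * c * s) := Real.exp_pos _
        nlinarith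
    have h0 : ψ t ≤ ψ 0 := hψmono Set.self_mem_Ici ht ht
    have he0 : e 0 x = x := by simp [he, exp_zero]
    rw [hψ] at h0
    simp only [mul_zero, Real.exp_zero, one_mul, he0, neg_zero, zero_smul] at h0
    rw [real_inner_self_eq_norm_sq, real_inner_self_eq_norm_sq] at h0
    have hep : 0 < Real.exp (2 * c * t) := Real.exp_pos _
    rw [neg_mul, Real.exp_neg, inv_mul_eq_div, le_div_iff₀ hep]
    nlinarith
  -- constancy of g t = ⟪D (e t x), e t y⟫
  have hg : ∀ (x y : V) (t : ℝ), ⟪D (e t x), e t y⟫_ℝ = ⟪D x, y⟫_ℝ := by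
    intro x y t
    have hDanti : ∀ u v : V, ⟪D (-(T u)), v⟫_ℝ + ⟪D u, -(T v)⟫_ℝ = 0 := by
      intro u v
      have h1 : ⟪D u, -(T v)⟫_ℝ = -⟪T (D u), v⟫_ℝ := by
        rw [inner_neg_right, ← hsw]
      have h2 : ⟪D (-(T u)), v⟫_ℝ = -⟪D (T u), v⟫_ℝ := by simp
      have h3 : T (D u) + D (T u) = 0 := by
        have := congrFun (congrArg DFunLike.coe hanti) u
        simpa using this
      have h4 : D (T u) = -(T (D u)) := by
        rw [eq_neg_iff_add_eq_zero, add_comm]; exact h3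
      rw [h1, h2, h4, inner_neg_left]; ring
    have hgd : ∀ s, HasDerivAt (fun t => ⟪D (e t x), e t y⟫_ℝ) 0 s := by
      intro s
      have hDu : HasDerivAt (fun t => D (e t x)) (D (-(T (e s x)))) s :=
        (hasDerivAt_const s D).clm_apply (hu x s) |>.congr_deriv (by simp)
      have := hDu.inner ℝ (hu y s)
      exact this.congr_deriv (by rw [add_comm]; exact hDanti _ _)
    have hconst := is_const_of_deriv_eq_zero (f := fun t => ⟪D (e t x), e t y⟫_ℝ)
      (fun s => (hgd s).differentiableAt) (fun s => (hgd s).deriv) t 0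
    simpa [he, exp_zero] using hconst
  -- conclude
  ext x
  simp only [ContinuousLinearMap.zero_apply]
  rw [← inner_self_eq_zero (𝕜 := ℝ)]
  have key : ∀ t : ℝ, 0 ≤ t → ⟪D x, D x⟫_ℝ ^ 2 ≤ ‖D‖^2 * ‖x‖^2 * ‖D x‖^2 * Real.exp (-(2*c)*t) ^ 2 := by
    intro t ht
    have h1 := hg x (D x) t
    have h2 : |⟪D (e t x), e t (D x)⟫_ℝ| ≤ ‖D (e t x)‖ * ‖e t (D x)‖ := abs_real_inner_le_norm _ _
    have h3 : ‖D (e t x)‖ ≤ ‖D‖ * ‖e t x‖ := D.le_opNorm _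
    have h4 := hphi x t ht
    have h5 := hphi (D x) t ht
    have h6 : (0:ℝ) ≤ ‖e t x‖ := norm_nonneg _
    have h7 : (0:ℝ) ≤ ‖e t (D x)‖ := norm_nonneg _
    have h8 : (0:ℝ) ≤ ‖D‖ := norm_nonneg _
    have h9 : ⟪D x, D x⟫_ℝ ^ 2 ≤ (‖D (e t x)‖ * ‖e t (D x)‖)^2 := by
      rw [← h1]
      calc ⟪D (e t x), e t (D x)⟫_ℝ ^ 2 = |⟪D (e t x), e t (D x)⟫_ℝ| ^ 2 := (sq_abs _).symm
        _ ≤ (‖D (e t x)‖ * ‖e t (D x)‖)^2 := by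
            apply pow_le_pow_left₀ (abs_nonneg _) h2
    have hex : (0:ℝ) < Real.exp (-(2*c)*t) := Real.exp_pos _
    have h3sq : ‖D (e t x)‖^2 ≤ ‖D‖^2 * ‖e t x‖^2 := by
      simpa [mul_pow] using pow_le_pow_left₀ (norm_nonneg (D (e t x))) h3 2
    calc ⟪D x, D x⟫_ℝ ^ 2 ≤ (‖D (e t x)‖ * ‖e t (D x)‖)^2 := h9
      _ = ‖D (e t x)‖^2 * ‖e t (D x)‖^2 := by ring
      _ ≤ (‖D‖^2 * ‖e t x‖^2) * (Real.exp (-(2*c)*t) * ‖D x‖^2) :=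
          mul_le_mul h3sq h5 (sq_nonneg _) (by positivity)
      _ ≤ (‖D‖^2 * (Real.exp (-(2*c)*t) * ‖x‖^2)) * (Real.exp (-(2*c)*t) * ‖D x‖^2) :=
          mul_le_mul_of_nonneg_right (mul_le_mul_of_nonneg_left h4 (sq_nonneg ‖D‖)) (by positivity)
      _ = ‖D‖^2 * ‖x‖^2 * ‖D x‖^2 * Real.exp (-(2*c)*t) ^ 2 := by ring
  have hlim : Filter.Tendsto (fun t : ℝ => ‖D‖^2 * ‖x‖^2 * ‖D x‖^2 * Real.exp (-(2*c)*t) ^ 2) Filter.atTop (nhds 0) := by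
    have h1 : Filter.Tendsto (fun t : ℝ => -(2*c)*t) Filter.atTop Filter.atBot := by
      apply Filter.Tendsto.const_mul_atTop_of_neg
      · linarith
      · exact Filter.tendsto_id
    have h2 := Real.tendsto_exp_atBot.comp h1
    have h3 : Filter.Tendsto (fun t : ℝ => Real.exp (-(2*c)*t) ^ 2) Filter.atTop (nhds 0) := by
      simpa using h2.pow 2
    simpa using h3.const_mul (‖D‖^2 * ‖x‖^2 * ‖D x‖^2)
  have hle : ⟪D x, D x⟫_ℝ ^ 2 ≤ 0 := by
    apply ge_of_tendsto hlim
    filter_upwards [Filter.eventually_ge_atTop 0] with t ht using key t ht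
  have : ⟪D x, D x⟫_ℝ ^ 2 = 0 := le_antisymm hle (sq_nonneg _)
  exact pow_eq_zero_iff (by norm_num) |>.mp this

set_option maxHeartbeats 2000000 in
theorem stmt_13 {V : Type*} [NormedAddCommGroup V] [InnerProductSpace ℝ V] [CompleteSpace V]
    (K L : Submodule ℝ V) (hKc : IsClosed (K : Set V)) (hLc : IsClosed (L : Set V))
    (hsup : K ⊔ L = ⊤) (hinf : K ⊓ L = ⊥)
    (P Q : V →L[ℝ] V) (hPsa : IsSelfAdjoint P) (hQsa : IsSelfAdjoint Q)
    (hPK : ∀ x, P x ∈ K) (hPfix : ∀ x ∈ K, P x = x)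
    (hQL : ∀ x, Q x ∈ L) (hQfix : ∀ x ∈ L, Q x = x)
    (J T : V →L[ℝ] V) (hJsa : IsSelfAdjoint J) (hJ2 : J * J = 1)
    (hT : T.IsPositive) (hT2 : T * T = (P - Q) * (P - Q)) (hJT : P - Q = J * T) :
    K.map (J : V →ₗ[ℝ] V) = Lᗮ ∧ L.map (J : V →ₗ[ℝ] V) = Kᗮ := by
  have hTsa : IsSelfAdjoint T := hT.isSelfAdjoint
  -- inner product swap lemmas
  have hsw : ∀ (S : V →L[ℝ] V), IsSelfAdjoint S → ∀ x y : V, ⟪S x, y⟫_ℝ = ⟪x, S y⟫_ℝ := by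
    intro S hS x y
    rw [← ContinuousLinearMap.adjoint_inner_left, (ContinuousLinearMap.isSelfAdjoint_iff').mp hS]
  -- idempotents
  have hP2 : P * P = P := by ext x; exact hPfix _ (hPK x)
  have hQ2 : Q * Q = Q := by ext x; exact hQfix _ (hQL x)
  -- kernels of P, Q
  have hKerQ : ∀ y, y ∈ Lᗮ ↔ Q y = 0 := by
    intro y
    rw [Submodule.mem_orthogonal]
    constructor
    · intro h
      rw [← inner_self_eq_zero (𝕜 := ℝ)]
      rw [hsw Q hQsa, real_inner_comm]
      exact h _ (hQL (Q y))
    · intro h u hu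
      rw [← hQfix u hu, hsw Q hQsa, h, inner_zero_right]
  have hKerP : ∀ y, y ∈ Kᗮ ↔ P y = 0 := by
    intro y
    rw [Submodule.mem_orthogonal]
    constructor
    · intro h
      rw [← inner_self_eq_zero (𝕜 := ℝ)]
      rw [hsw P hPsa, real_inner_comm]
      exact h _ (hPK (P y))
    · intro h u hu
      rw [← hPfix u hu, hsw P hPsa, h, inner_zero_right]
  -- the continuous projection onto K along L
  have hcompl : IsCompl K L := ⟨disjoint_iff.mpr hinf, codisjoint_iff.mpr hsup⟩
  set E : V →L[ℝ] V := K.subtypeL ∘L K.linearProjOfClosedCompl L hcompl hKc hLc with hEdef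
  have hEapp : ∀ x, E x = (K.linearProjOfIsCompl L hcompl x : V) := by
    intro x
    rfl
  have hEK : ∀ x, E x ∈ K := fun x => by rw [hEapp]; exact Submodule.coe_mem _
  have hEfix : ∀ x ∈ K, E x = x := by
    intro x hx
    rw [hEapp]
    exact congrArg _ (Submodule.linearProjOfIsCompl_apply_left hcompl ⟨x, hx⟩)
  have hEL : ∀ x ∈ L, E x = 0 := by
    intro x hx
    rw [hEapp]; erw [Submodule.linearProjOfIsCompl_apply_right' hcompl hx]
    rfl
  have hsubL : ∀ x, x - E x ∈ L := by
    intro x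
    have h := Submodule.projection_add_projection_eq_self hcompl x
    rw [hEapp]
    have : x - (K.linearProjOfIsCompl L hcompl x : V)
        = (L.linearProjOfIsCompl K hcompl.symm x : V) := by
      rw [sub_eq_iff_eq_add, add_comm]; exact h.symm
    rw [this]
    exact Submodule.coe_mem _
  clear hEdef
  -- operator identities for E and its adjoint F
  set A : V →L[ℝ] V := P - Q with hAdef
  set B : V →L[ℝ] V := P + Q - 1 with hBdef
  set F : V →L[ℝ] V := star E with hFdef
  have hEP : E * P = P := by ext x; exact hEfix _ (hPK x)
  have hPE : P * E = E := by ext x; exact hPfix _ (hEK x)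
  have hEQ : E * Q = 0 := by ext x; exact hEL _ (hQL x)
  have hQE : Q * E = E + Q - 1 := by
    ext x
    have h1 : Q (x - E x) = x - E x := hQfix _ (hsubL x)
    have h2 : Q x - Q (E x) = x - E x := by rw [← h1, map_sub]
    simp only [ContinuousLinearMap.mul_apply, ContinuousLinearMap.sub_apply,
      ContinuousLinearMap.add_apply, ContinuousLinearMap.one_apply]
    have h3 : Q (E x) = Q x - x + E x := by
      have h4 : Q x - Q (E x) - (x - E x) = 0 := sub_eq_zero.mpr h2
      have h5 : Q (E x) - (Q x - x + E x) = -(Q x - Q (E x) - (x - E x)) := by abel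
      rw [h4, neg_zero] at h5
      exact sub_eq_zero.mp h5
    rw [h3]; abel
  have hPF : P * F = P := by
    have h1 : star (E * P) = P * F := by rw [star_mul, hPsa.star_eq, hFdef]
    rw [← h1, hEP, hPsa.star_eq]
  have hQF : Q * F = 0 := by
    have h1 : star (E * Q) = Q * F := by rw [star_mul, hQsa.star_eq, hFdef]
    rw [← h1, hEQ, star_zero]
  -- R = E + F - 1 is a two-sided inverse of A
  set R : V →L[ℝ] V := E + F - 1 with hRdef
  have hRsa : star R = R := by
    rw [hRdef, hFdef, star_sub, star_add, star_star, star_one]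
    abel
  have hAR : A * R = 1 := by
    have expand : A * R = P*E + P*F - P - Q*E - Q*F + Q := by
      rw [hAdef, hRdef]; noncomm_ring
    rw [expand, hPE, hPF, hQE, hQF]
    abel
  have hRA : R * A = 1 := by
    have h1 := congrArg star hAR
    rwa [star_mul, star_one, hRsa, (hPsa.sub hQsa).star_eq] at h1
  -- A and T relations
  have hAsa : IsSelfAdjoint A := hPsa.sub hQsa
  have hBsa : IsSelfAdjoint B := (hPsa.add hQsa).sub (IsSelfAdjoint.one _)
  have hJA : J * A = T := by rw [hJT, ← mul_assoc, hJ2, one_mul]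
  have hTJ : T * J = A := by
    have h1 := congrArg star hJT
    rwa [star_mul, hTsa.star_eq, hJsa.star_eq, hAsa.star_eq, eq_comm] at h1
  have hAJ : A * J = T := by rw [← hTJ, mul_assoc, hJ2, mul_one]
  -- T is invertible with inverse Ti
  set Ti : V →L[ℝ] V := R * J with hTidef
  have hTTi : T * Ti = 1 := by
    rw [hTidef, ← hJA, mul_assoc, ← mul_assoc A R J, hAR, one_mul, hJ2]
  have hTiT : Ti * T = 1 := by
    rw [hTidef, mul_assoc, ← hJT, hRA]
  have hTisa : IsSelfAdjoint Ti := by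
    show star Ti = Ti
    have h1 : star Ti * T = 1 := by
      have := congrArg star hTTi
      rwa [star_mul, hTsa.star_eq, star_one] at this
    have h2 : star Ti = star Ti * (T * Ti) := by rw [hTTi, mul_one]
    rw [h2, ← mul_assoc, h1, one_mul]
  have hTiTapp : ∀ v, Ti (T v) = v := by
    intro v
    have := congrFun (congrArg DFunLike.coe hTiT) v
    simpa using this
  have hTTiapp : ∀ v, T (Ti v) = v := by
    intro v
    have := congrFun (congrArg DFunLike.coe hTTi) v
    simpa using this
  -- Ti is positive
  have hTipos : ∀ y, 0 ≤ ⟪Ti y, y⟫_ℝ := by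
    intro y
    have h1 : ⟪Ti y, y⟫_ℝ = ⟪Ti y, T (Ti y)⟫_ℝ := by rw [hTTiapp]
    rw [h1, real_inner_comm]
    have := hT.inner_nonneg_left (Ti y)
    simpa using this
  -- Cauchy-Schwarz for Ti
  have hCS : ∀ a b : V, ⟪Ti a, b⟫_ℝ ^ 2 ≤ ⟪Ti a, a⟫_ℝ * ⟪Ti b, b⟫_ℝ := by
    intro a b
    have hq : ∀ t : ℝ, 0 ≤ ⟪Ti b, b⟫_ℝ * (t * t) + (2 * ⟪Ti a, b⟫_ℝ) * t + ⟪Ti a, a⟫_ℝ := by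
      intro t
      have h0 := hTipos (a + t • b)
      have hexp : ⟪Ti (a + t • b), a + t • b⟫_ℝ
          = ⟪Ti a, a⟫_ℝ + t * ⟪Ti a, b⟫_ℝ + t * ⟪Ti b, a⟫_ℝ + t ^ 2 * ⟪Ti b, b⟫_ℝ := by
        simp only [map_add, map_smul, inner_add_left, inner_add_right,
          real_inner_smul_left, real_inner_smul_right, smul_smul]
        ring
      have hsym : ⟪Ti b, a⟫_ℝ = ⟪Ti a, b⟫_ℝ := by
        rw [hsw Ti hTisa, real_inner_comm]
      rw [hexp, hsym] at h0
      nlinarith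
    have hd := discrim_le_zero hq
    rw [discrim] at hd
    nlinarith
  -- coercivity of T
  set c : ℝ := (1 + ‖Ti‖)⁻¹ with hcdef
  have hc : 0 < c := by
    rw [hcdef]
    have : (0:ℝ) < 1 + ‖Ti‖ := by positivity
    positivity
  have hcoer : ∀ u, c * ‖u‖ ^ 2 ≤ ⟪T u, u⟫_ℝ := by
    intro u
    have h1 : ⟪u, u⟫_ℝ = ⟪Ti (T u), u⟫_ℝ := by rw [hTiTapp]
    have h3 := hCS (T u) u
    have h4 : ⟪Ti (T u), T u⟫_ℝ = ⟪T u, u⟫_ℝ := by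
      rw [hTiTapp, real_inner_comm]
    have h5 : ⟪Ti u, u⟫_ℝ ≤ (1 + ‖Ti‖) * ‖u‖ ^ 2 := by
      calc ⟪Ti u, u⟫_ℝ ≤ ‖Ti u‖ * ‖u‖ := real_inner_le_norm _ _
        _ ≤ (‖Ti‖ * ‖u‖) * ‖u‖ :=
            mul_le_mul_of_nonneg_right (Ti.le_opNorm u) (norm_nonneg u)
        _ ≤ (1 + ‖Ti‖) * ‖u‖ ^ 2 := by nlinarith [norm_nonneg u, norm_nonneg Ti]
    have h6 : ‖u‖ ^ 2 * ‖u‖ ^ 2 ≤ ⟪T u, u⟫_ℝ * ((1 + ‖Ti‖) * ‖u‖ ^ 2) := by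
      have h7 : ⟪u, u⟫_ℝ = ‖u‖ ^ 2 := real_inner_self_eq_norm_sq u
      have h8 : (0:ℝ) ≤ ⟪T u, u⟫_ℝ := by simpa using hT.inner_nonneg_left u
      calc ‖u‖ ^ 2 * ‖u‖ ^ 2 = ⟪Ti (T u), u⟫_ℝ ^ 2 := by rw [← h1, h7]; ring
        _ ≤ ⟪Ti (T u), T u⟫_ℝ * ⟪Ti u, u⟫_ℝ := h3
        _ = ⟪T u, u⟫_ℝ * ⟪Ti u, u⟫_ℝ := by rw [h4]
        _ ≤ ⟪T u, u⟫_ℝ * ((1 + ‖Ti‖) * ‖u‖ ^ 2) := mul_le_mul_of_nonneg_left h5 h8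
    have h9 : (0:ℝ) < 1 + ‖Ti‖ := by positivity
    rw [hcdef, inv_mul_le_iff₀ h9]
    rcases eq_or_ne ‖u‖ 0 with h | h
    · have h8 : (0:ℝ) ≤ ⟪T u, u⟫_ℝ := by simpa using hT.inner_nonneg_left u
      simpa [h] using mul_nonneg h9.le h8
    · have h10 : (0:ℝ) < ‖u‖ ^ 2 := by positivity
      nlinarith
  -- B commutes with T
  have e1 : A * B = P * Q - Q * P := by
    have expand : A * B = P*P + P*Q - P - Q*P - Q*Q + Q := by
      rw [hAdef, hBdef]; noncomm_ring
    rw [expand, hP2, hQ2]; abel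
  have e2 : B * A = Q * P - P * Q := by
    have expand : B * A = P*P - P*Q + Q*P - Q*Q - P + Q := by
      rw [hAdef, hBdef]; noncomm_ring
    rw [expand, hP2, hQ2]; abel
  have hBA : B * A = -(A * B) := by rw [e1, e2]; abel
  have hBT2 : B * (T * T) = (T * T) * B := by
    rw [hT2, ← mul_assoc, hBA, neg_mul, mul_assoc, hBA, mul_neg, neg_neg, ← mul_assoc]
  have hanti : T * (B * T - T * B) + (B * T - T * B) * T = 0 := by
    have expand : T * (B * T - T * B) + (B * T - T * B) * T = B * (T * T) - (T * T) * B := by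
      noncomm_ring
    rw [expand, hBT2, sub_self]
  have hD0 := keylemma T (B * T - T * B) hTsa c hc hcoer hanti
  have hBT : B * T = T * B := sub_eq_zero.mp hD0
  -- J anticommutes with B
  have hST : (J * B + B * J) * T = 0 := by
    have h1 : (J * B) * T = A * B := by rw [mul_assoc, hBT, ← mul_assoc, ← hJT]
    have h2 : (B * J) * T = -(A * B) := by rw [mul_assoc, ← hJT, hBA]
    rw [add_mul, h1, h2, add_neg_cancel]
  have hTS : T * (J * B + B * J) = 0 := by
    have h1 := congrArg star hST
    rwa [star_mul, star_add, star_mul, star_mul, hTsa.star_eq, hJsa.star_eq, hBsa.star_eq,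
      star_zero, add_comm] at h1
  have hS0 : J * B + B * J = 0 := by
    ext x
    have h1 : T ((J * B + B * J) x) = 0 := by
      rw [← ContinuousLinearMap.mul_apply, hTS]; rfl
    have h2 := hTiTapp ((J * B + B * J) x)
    rw [h1, map_zero] at h2
    simpa using h2.symm
  have hJB : J * B = -(B * J) := by
    rw [eq_neg_iff_add_eq_zero]; exact hS0
  have hJA' : J * A = A * J := hJA.trans hAJ.symm
  -- intertwining identities
  have h1 : J * P - J * Q = P * J - Q * J := by
    have := hJA'
    rw [hAdef] at this
    calc J * P - J * Q = J * (P - Q) := by rw [mul_sub]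
      _ = (P - Q) * J := this
      _ = P * J - Q * J := by rw [sub_mul]
  have h2 : J * P + J * Q - J = -(P * J + Q * J - J) := by
    have := hJB
    rw [hBdef] at this
    calc J * P + J * Q - J = J * (P + Q - 1) := by rw [mul_sub, mul_add, mul_one]
      _ = -((P + Q - 1) * J) := this
      _ = -(P * J + Q * J - J) := by rw [sub_mul, add_mul, one_mul]
  have hJP : J * P = J - Q * J := by
    have h3 : (2:ℝ) • (J * P) = (2:ℝ) • (J - Q * J) := by
      calc (2:ℝ) • (J * P) = (J * P - J * Q) + (J * P + J * Q - J) + J := by module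
        _ = (P * J - Q * J) + (-(P * J + Q * J - J)) + J := by rw [h1, h2]
        _ = (2:ℝ) • (J - Q * J) := by module
    exact smul_right_injective _ (two_ne_zero) h3
  have hJQ : J * Q = J - P * J := by
    have h3 : (2:ℝ) • (J * Q) = (2:ℝ) • (J - P * J) := by
      calc (2:ℝ) • (J * Q) = -(J * P - J * Q) + (J * P + J * Q - J) + J := by module
        _ = -(P * J - Q * J) + (-(P * J + Q * J - J)) + J := by rw [h1, h2]
        _ = (2:ℝ) • (J - P * J) := by module
    exact smul_right_injective _ (two_ne_zero) h3
  have hPJ : P * J = J - J * Q := by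
    have h4 := congrArg star hJP
    rwa [star_mul, star_sub, star_mul, hJsa.star_eq, hPsa.star_eq, hQsa.star_eq] at h4
  have hQJ : Q * J = J - J * P := by
    have h4 := congrArg star hJQ
    rwa [star_mul, star_sub, star_mul, hJsa.star_eq, hPsa.star_eq, hQsa.star_eq] at h4
  -- conclusion
  have happ : ∀ (S S' : V →L[ℝ] V) (x : V), (S * S') x = S (S' x) := fun _ _ _ => rfl
  constructor
  · ext y
    rw [Submodule.mem_map, hKerQ]
    constructor
    · rintro ⟨x, hx, rfl⟩
      show Q (J x) = 0
      have := congrFun (congrArg DFunLike.coe hQJ) x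
      rw [happ] at this
      simp only [ContinuousLinearMap.sub_apply] at this
      rw [this, happ, hPfix x hx, sub_self]
    · intro hy
      refine ⟨J y, ?_, ?_⟩
      · have := congrFun (congrArg DFunLike.coe hPJ) y
        rw [happ] at this
        simp only [ContinuousLinearMap.sub_apply] at this
        rw [happ, hy, map_zero, sub_zero] at this
        rw [show (J y : V) = P (J y) from this.symm]
        exact hPK _
      · show J (J y) = y
        rw [← happ, hJ2]; rfl
  · ext y
    rw [Submodule.mem_map, hKerP]
    constructor
    · rintro ⟨x, hx, rfl⟩
      show P (J x) = 0
      have := congrFun (congrArg DFunLike.coe hPJ) x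
      rw [happ] at this
      simp only [ContinuousLinearMap.sub_apply] at this
      rw [this, happ, hQfix x hx, sub_self]
    · intro hy
      refine ⟨J y, ?_, ?_⟩
      · have := congrFun (congrArg DFunLike.coe hQJ) y
        rw [happ] at this
        simp only [ContinuousLinearMap.sub_apply] at this
        rw [happ, hy, map_zero, sub_zero] at this
        rw [show (J y : V) = Q (J y) from this.symm]
        exact hQL _
      · show J (J y) = y
        rw [← happ, hJ2]; rfl
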